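/- Let M be a graphic matrix and D a symmetric division of M, and let d ≥ 2 be an integer. Suppose the adjacency matrix M^H_D of the horizontal compression G^H_D (rows and columns in the natural order inherited from M) contains a d-almost mixed minor. Then M contains a d-almost mixed minor L such that: (1) L is a coarsening of D; and (2) each row block of L is the union of at least two row blocks of D and each column block of L is the union of at least two column blocks of D. -/

import Mathlib

namespace TwPaper


/-- A `{0,1}`-matrix with `m` rows and `n` columns, entries modeled as `Bool`. -/
abbrev BMatrix (m n : ℕ) := Matrix (Fin m) (Fin n) Bool

/-- The submatrix of `M` given by rows `R` and columns `C` is horizontal: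
all its rows are constant. -/
def Horizontal {m n : ℕ} (M : BMatrix m n) (R : Set (Fin m)) (C : Set (Fin n)) : Prop :=
  ∀ i ∈ R, ∀ j ∈ C, ∀ j' ∈ C, M i j = M i j'

/-- The submatrix of `M` given by rows `R` and columns `C` is vertical:
all its columns are constant. -/
def Vertical {m n : ℕ} (M : BMatrix m n) (R : Set (Fin m)) (C : Set (Fin n)) : Prop :=
  ∀ j ∈ C, ∀ i ∈ R, ∀ i' ∈ R, M i j = M i' j

/-- The submatrix of `M` given by rows `R` and columns `C` is mixed:
neither horizontal nor vertical. -/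
def Mixed {m n : ℕ} (M : BMatrix m n) (R : Set (Fin m)) (C : Set (Fin n)) : Prop :=
  ¬ Horizontal M R C ∧ ¬ Vertical M R C

/-- The submatrix of `M` given by rows `R` and columns `C` is constant `0`. -/
def ConstantZero {m n : ℕ} (M : BMatrix m n) (R : Set (Fin m)) (C : Set (Fin n)) : Prop :=
  ∀ i ∈ R, ∀ j ∈ C, M i j = false

/-- A `d`-division of an `m × n` matrix: a partition of the rows into `d` contiguous
nonempty blocks, and likewise for columns.  It is encoded by the monotone surjective
maps sending a row (resp. column) to the index of its block. -/
structure Division (m n d : ℕ) where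
  row : Fin m → Fin d
  col : Fin n → Fin d
  row_mono : Monotone row
  col_mono : Monotone col
  row_surj : Function.Surjective row
  col_surj : Function.Surjective col

/-- The `i`-th row block of a division. -/
def Division.rowBlock {m n d : ℕ} (D : Division m n d) (i : Fin d) : Set (Fin m) :=
  {a | D.row a = i}

/-- The `j`-th column block of a division. -/
def Division.colBlock {m n d : ℕ} (D : Division m n d) (j : Fin d) : Set (Fin n) :=
  {b | D.col b = j}

/-- The zone `D[i,j]` of the division `D` of `M` is mixed. -/
def Division.ZoneMixed {m n d : ℕ} (D : Division m n d) (M : BMatrix m n) (i j : Fin d) : Prop :=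
  Mixed M (D.rowBlock i) (D.colBlock j)

/-- A `d`-division is a `d`-almost mixed minor if every off-diagonal zone is mixed. -/
def IsAlmostMixedMinor {m n d : ℕ} (M : BMatrix m n) (D : Division m n d) : Prop :=
  ∀ i j : Fin d, i ≠ j → D.ZoneMixed M i j

/-- A `d`-division is a `d`-mixed minor if every zone is mixed. -/
def IsMixedMinor {m n d : ℕ} (M : BMatrix m n) (D : Division m n d) : Prop :=
  ∀ i j : Fin d, D.ZoneMixed M i j

/-- `M` is `d`-almost mixed-free: it has no `d`-almost mixed minor. -/
def AlmostMixedFree {m n : ℕ} (d : ℕ) (M : BMatrix m n) : Prop :=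
  ¬ ∃ D : Division m n d, IsAlmostMixedMinor M D

/-- `M` is `d`-mixed-free: it has no `d`-mixed minor. -/
def MixedFree {m n : ℕ} (d : ℕ) (M : BMatrix m n) : Prop :=
  ¬ ∃ D : Division m n d, IsMixedMinor M D

/-- A graphic matrix: symmetric with zero diagonal. -/
def Graphic {n : ℕ} (M : BMatrix n n) : Prop :=
  (∀ i j, M i j = M j i) ∧ (∀ i, M i i = false)

/-- A division of a square matrix is symmetric if rows and columns are
partitioned in exactly the same way. -/
def Division.Symm {n d : ℕ} (D : Division n n d) : Prop := D.row = D.col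

/-- `L` is a coarsening of `D`: every row (resp. column) block of `L` is a union of
consecutive row (resp. column) blocks of `D`. -/
def Coarsens {m n d e : ℕ} (L : Division m n e) (D : Division m n d) : Prop :=
  (∀ a a' : Fin m, D.row a = D.row a' → L.row a = L.row a') ∧
  (∀ b b' : Fin n, D.col b = D.col b' → L.col b = L.col b')

/-- The zone is horizontal and not constant `0`. -/
def HorizNonzero {m n : ℕ} (M : BMatrix m n) (R : Set (Fin m)) (C : Set (Fin n)) : Prop :=
  Horizontal M R C ∧ ¬ ConstantZero M R C

/-- The zone is vertical and not constant `0`. -/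
def VertNonzero {m n : ℕ} (M : BMatrix m n) (R : Set (Fin m)) (C : Set (Fin n)) : Prop :=
  Vertical M R C ∧ ¬ ConstantZero M R C

/-- The horizontal compression `G^H_D` of a graphic matrix `M` along a symmetric
division `D` with `s` blocks: vertices are the blocks, and `i j` (for `i < j`) are
adjacent iff the zone `D[i,j]` is horizontal and not constant `0`. -/
def horizCompression {n s : ℕ} (M : BMatrix n n) (D : Division n n s) : SimpleGraph (Fin s) :=
  SimpleGraph.fromRel (fun i j => i < j ∧ HorizNonzero M (D.rowBlock i) (D.colBlock j))

/-- The vertical compression `G^V_D`. -/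
def vertCompression {n s : ℕ} (M : BMatrix n n) (D : Division n n s) : SimpleGraph (Fin s) :=
  SimpleGraph.fromRel (fun i j => i < j ∧ VertNonzero M (D.rowBlock i) (D.colBlock j))

/-- The mixed compression `G^M_D`: `i ≠ j` are adjacent iff the zone `D[i,j]` is mixed. -/
def mixedCompression {n s : ℕ} (M : BMatrix n n) (D : Division n n s) : SimpleGraph (Fin s) :=
  SimpleGraph.fromRel (fun i j => D.ZoneMixed M i j)

open Classical in
/-- The adjacency matrix of a graph on `Fin s`, rows and columns in the natural order. -/
noncomputable def graphMatrix {s : ℕ} (G : SimpleGraph (Fin s)) : BMatrix s s :=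
  fun i j => if G.Adj i j then true else false

open Classical in
/-- The adjacency matrix of `G` under the vertex ordering given by the
enumeration `e` of its vertices. -/
noncomputable def adjMatrix {V : Type*} [Fintype V] (G : SimpleGraph V)
    (e : Fin (Fintype.card V) ≃ V) : BMatrix (Fintype.card V) (Fintype.card V) :=
  fun i j => if G.Adj (e i) (e j) then true else false

/-- `G` admits, under some linear ordering of its vertices, a `d`-almost mixed-free
adjacency matrix. -/
def AdmitsAMFree {V : Type*} [Fintype V] (d : ℕ) (G : SimpleGraph V) : Prop :=
  ∃ e : Fin (Fintype.card V) ≃ V, AlmostMixedFree d (adjMatrix G e)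


private lemma bool_eq_of_iff {a b : Bool} (h : a = true ↔ b = true) : a = b := by
  cases a <;> cases b <;> simp_all

private lemma graphMatrix_true_iff {s : ℕ} (G : SimpleGraph (Fin s)) (p q : Fin s) :
    graphMatrix G p q = true ↔ G.Adj p q := by
  classical
  by_cases h : G.Adj p q <;> simp [graphMatrix, h]

private lemma graphMatrix_symm {s : ℕ} (G : SimpleGraph (Fin s)) (p q : Fin s) :
    graphMatrix G p q = graphMatrix G q p := by
  classical
  by_cases h : G.Adj p q
  · have h2 : G.Adj q p := G.adj_symm h
    simp [graphMatrix, h, h2]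
  · have h2 : ¬ G.Adj q p := fun h' => h (G.adj_symm h')
    simp [graphMatrix, h, h2]

/-- Key lifting lemma: if the lifted zone of `M` is horizontal, then the corresponding
zone of the adjacency matrix of the horizontal compression is horizontal. -/
private lemma horiz_lift {n s d : ℕ} {M : BMatrix n n} (hM : Graphic M)
    {D : Division n n s} (hD : D.Symm)
    (f g : Fin s → Fin d) (hg : Monotone g) (i j : Fin d)
    (hH : Horizontal M {a | f (D.row a) = i} {b | g (D.col b) = j}) :
    Horizontal (graphMatrix (horizCompression M D)) {r | f r = i} {c | g c = j} := by
  classical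
  have hrowcol : D.row = D.col := hD
  have hadj : ∀ p q : Fin s, graphMatrix (horizCompression M D) p q = true ↔
      p ≠ q ∧ ((p < q ∧ HorizNonzero M (D.rowBlock p) (D.colBlock q)) ∨
        (q < p ∧ HorizNonzero M (D.rowBlock q) (D.colBlock p))) := by
    intro p q
    rw [graphMatrix_true_iff]
    simp [horizCompression, SimpleGraph.fromRel_adj]
  intro r hr c hc c' hc'
  simp only [Set.mem_setOf_eq] at hr hc hc'
  by_cases hrj : g r = j
  · -- the row block `r` also lies in the column range: all entries are `false`
    have key : ∀ c0 : Fin s, g c0 = j → graphMatrix (horizCompression M D) r c0 = false := by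
      intro c0 hc0
      by_contra hne
      rw [Bool.not_eq_false] at hne
      obtain ⟨hne', hrel⟩ := (hadj r c0).1 hne
      rcases hrel with ⟨-, hhor, hnz⟩ | ⟨-, hhor, hnz⟩
      · apply hnz
        intro a ha b hb
        have ha' : D.row a = r := ha
        have hb' : D.col b = c0 := hb
        have haR : f (D.row a) = i := by rw [ha', hr]
        have haC : g (D.col a) = j := by rw [← hrowcol, ha', hrj]
        have hbC : g (D.col b) = j := by rw [hb', hc0]
        have h1 := hH a haR b hbC a haC
        rw [h1, hM.2 a]
      · apply hnz
        intro a ha b hb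
        have ha' : D.row a = c0 := ha
        have hb' : D.col b = r := hb
        have hbR : f (D.row b) = i := by rw [hrowcol, hb', hr]
        have hbC : g (D.col b) = j := by rw [hb', hrj]
        have haC : g (D.col a) = j := by rw [← hrowcol, ha', hc0]
        have h1 := hH b hbR a haC b hbC
        rw [hM.1 a b, h1, hM.2 b]
    rw [key c hc, key c' hc']
  · have hcr : c ≠ r := fun h => hrj (h ▸ hc)
    have hc'r : c' ≠ r := fun h => hrj (h ▸ hc')
    have hside : ∀ c0 c1 : Fin s, g c0 = j → g c1 = j → c0 < r → r < c1 → False := by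
      intro c0 c1 h0 h1 hlt hlt'
      exact hrj (le_antisymm (h1 ▸ hg hlt'.le) (h0 ▸ hg hlt.le))
    have upper : ∀ c0 c1 : Fin s, g c0 = j → g c1 = j →
        HorizNonzero M (D.rowBlock r) (D.colBlock c0) →
        HorizNonzero M (D.rowBlock r) (D.colBlock c1) := by
      rintro c0 c1 h0 h1 ⟨hhor, hnz⟩
      constructor
      · intro a ha b hb b' hb'
        exact hH a (by show f (D.row a) = i; rw [show D.row a = r from ha, hr]) b
          (by show g (D.col b) = j; rw [show D.col b = c1 from hb, h1]) b'
          (by show g (D.col b') = j; rw [show D.col b' = c1 from hb', h1])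
      · intro hzero
        apply hnz
        intro a ha b hb
        obtain ⟨b1, hb1⟩ := D.col_surj c1
        have h2 := hH a (by show f (D.row a) = i; rw [show D.row a = r from ha, hr]) b
          (by show g (D.col b) = j; rw [show D.col b = c0 from hb, h0]) b1
          (by show g (D.col b1) = j; rw [hb1, h1])
        rw [h2]
        exact hzero a ha b1 hb1
    have lower : ∀ c0 c1 : Fin s, g c0 = j → g c1 = j →
        HorizNonzero M (D.rowBlock c0) (D.colBlock r) →
        HorizNonzero M (D.rowBlock c1) (D.colBlock r) := by
      rintro c0 c1 h0 h1 ⟨hhor, hnz⟩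
      obtain ⟨a0, ha0⟩ := D.col_surj c0
      have ha0row : D.row a0 = c0 := by rw [hrowcol, ha0]
      have ha0C : g (D.col a0) = j := by rw [ha0, h0]
      constructor
      · intro a ha b hb b' hb'
        have haC : g (D.col a) = j := by rw [← hrowcol, show D.row a = c1 from ha, h1]
        have hbR : f (D.row b) = i := by rw [hrowcol, show D.col b = r from hb, hr]
        have hb'R : f (D.row b') = i := by rw [hrowcol, show D.col b' = r from hb', hr]
        have e1 : M b a = M b a0 := hH b hbR a haC a0 ha0C
        have e2 : M b' a0 = M b' a := hH b' hb'R a0 ha0C a haC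
        have e3 : M a0 b = M a0 b' := hhor a0 ha0row b hb b' hb'
        calc M a b = M b a := hM.1 a b
        _ = M b a0 := e1
        _ = M a0 b := hM.1 b a0
        _ = M a0 b' := e3
        _ = M b' a0 := hM.1 a0 b'
        _ = M b' a := e2
        _ = M a b' := hM.1 b' a
      · intro hzero
        apply hnz
        intro a ha b hb
        obtain ⟨a1, ha1⟩ := D.row_surj c1
        have ha1col : D.col a1 = c1 := by rw [← hrowcol, ha1]
        have hbR : f (D.row b) = i := by rw [hrowcol, show D.col b = r from hb, hr]
        have haC : g (D.col a) = j := by rw [← hrowcol, show D.row a = c0 from ha, h0]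
        have ha1C : g (D.col a1) = j := by rw [ha1col, h1]
        have e1 : M b a = M b a1 := hH b hbR a haC a1 ha1C
        have e2 := hzero a1 ha1 b hb
        rw [hM.1 a b, e1, hM.1 b a1, e2]
    rcases lt_or_gt_of_ne hcr with h1 | h1 <;> rcases lt_or_gt_of_ne hc'r with h2 | h2
    · -- c < r and c' < r
      apply bool_eq_of_iff
      have e1 : graphMatrix (horizCompression M D) r c = true ↔
          HorizNonzero M (D.rowBlock c) (D.colBlock r) := by
        rw [hadj]
        constructor
        · rintro ⟨-, ⟨hlt, -⟩ | ⟨-, h⟩⟩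
          · exact absurd hlt (not_lt.2 h1.le)
          · exact h
        · intro h
          exact ⟨ne_of_gt h1, Or.inr ⟨h1, h⟩⟩
      have e2 : graphMatrix (horizCompression M D) r c' = true ↔
          HorizNonzero M (D.rowBlock c') (D.colBlock r) := by
        rw [hadj]
        constructor
        · rintro ⟨-, ⟨hlt, -⟩ | ⟨-, h⟩⟩
          · exact absurd hlt (not_lt.2 h2.le)
          · exact h
        · intro h
          exact ⟨ne_of_gt h2, Or.inr ⟨h2, h⟩⟩
      rw [e1, e2]
      exact ⟨lower c c' hc hc', lower c' c hc' hc⟩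
    · exact absurd (hside c c' hc hc' h1 h2) (fun h => h)
    · exact absurd (hside c' c hc' hc h2 h1) (fun h => h)
    · -- r < c and r < c'
      apply bool_eq_of_iff
      have e1 : graphMatrix (horizCompression M D) r c = true ↔
          HorizNonzero M (D.rowBlock r) (D.colBlock c) := by
        rw [hadj]
        constructor
        · rintro ⟨-, ⟨-, h⟩ | ⟨hlt, -⟩⟩
          · exact h
          · exact absurd hlt (not_lt.2 h1.le)
        · intro h
          exact ⟨ne_of_lt h1, Or.inl ⟨h1, h⟩⟩
      have e2 : graphMatrix (horizCompression M D) r c' = true ↔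
          HorizNonzero M (D.rowBlock r) (D.colBlock c') := by
        rw [hadj]
        constructor
        · rintro ⟨-, ⟨-, h⟩ | ⟨hlt, -⟩⟩
          · exact h
          · exact absurd hlt (not_lt.2 h2.le)
        · intro h
          exact ⟨ne_of_lt h2, Or.inl ⟨h2, h⟩⟩
      rw [e1, e2]
      exact ⟨upper c c' hc hc', upper c' c hc' hc⟩

private lemma vert_lift {n s d : ℕ} {M : BMatrix n n} (hM : Graphic M)
    {D : Division n n s} (hD : D.Symm) (E : Division s s d) (i j : Fin d)
    (hV : Vertical M {a | E.row (D.row a) = i} {b | E.col (D.col b) = j}) :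
    Vertical (graphMatrix (horizCompression M D)) {r | E.row r = i} {c | E.col c = j} := by
  have hrowcol : D.row = D.col := hD
  have hH' : Horizontal M {a | E.col (D.row a) = j} {b | E.row (D.col b) = i} := by
    intro a ha b hb b' hb'
    have haC : E.col (D.col a) = j := by rw [← hrowcol]; exact ha
    have hbR : E.row (D.row b) = i := by rw [hrowcol]; exact hb
    have hb'R : E.row (D.row b') = i := by rw [hrowcol]; exact hb'
    calc M a b = M b a := hM.1 a b
    _ = M b' a := hV a haC b hbR b' hb'R
    _ = M a b' := hM.1 b' a
  have hlift := horiz_lift hM hD E.col E.row E.row_mono j i hH'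
  intro c hc p hp p' hp'
  have h2 := hlift c hc p hp p' hp'
  rw [graphMatrix_symm _ p c, graphMatrix_symm _ p' c]
  exact h2

/-- Let `M` be a graphic matrix, `D` a symmetric division of `M`, and
`d ≥ 2`. If the adjacency matrix of the horizontal compression `G^H_D` (rows and columns
in the natural order) contains a `d`-almost mixed minor, then `M` contains a `d`-almost
mixed minor `L` such that (1) `L` is a coarsening of `D`, and (2) each row block of `L`
is the union of at least two row blocks of `D`, and each column block of `L` is the
union of at least two column blocks of `D`. -/
theorem almost_minor_lifting {n s : ℕ} (d : ℕ) (hd : 2 ≤ d)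
    (M : BMatrix n n) (hM : Graphic M) (D : Division n n s) (hD : D.Symm)
    (hE : ∃ E : Division s s d,
      IsAlmostMixedMinor (graphMatrix (horizCompression M D)) E) :
    ∃ L : Division n n d, IsAlmostMixedMinor M L ∧ Coarsens L D ∧
      (∀ i : Fin d, ∃ a a' : Fin n, L.row a = i ∧ L.row a' = i ∧ D.row a ≠ D.row a') ∧
      (∀ j : Fin d, ∃ b b' : Fin n, L.col b = j ∧ L.col b' = j ∧ D.col b ≠ D.col b') := by
  classical
  obtain ⟨E, hE⟩ := hE
  refine ⟨⟨E.row ∘ D.row, E.col ∘ D.col, E.row_mono.comp D.row_mono, E.col_mono.comp D.col_mono,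
    E.row_surj.comp D.row_surj, E.col_surj.comp D.col_surj⟩, ?_, ?_, ?_, ?_⟩
  · intro i j hij
    obtain ⟨hnh, hnv⟩ := hE i j hij
    constructor
    · intro h
      exact hnh (horiz_lift hM hD E.row E.col E.col_mono i j h)
    · intro h
      exact hnv (vert_lift hM hD E i j h)
  · exact ⟨fun a a' h => congrArg E.row h, fun b b' h => congrArg E.col h⟩
  · intro i
    obtain ⟨j, hj⟩ := Fintype.exists_ne_of_one_lt_card
      (by simp only [Fintype.card_fin]; omega) i
    have h2 : ∃ p p' : Fin s, E.row p = i ∧ E.row p' = i ∧ p ≠ p' := by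
      by_contra hcon
      push_neg at hcon
      exact (hE i j (Ne.symm hj)).2 (fun c _ p hp p' hp' => by
        rw [hcon p p' hp hp'])
    obtain ⟨p, p', hp, hp', hne⟩ := h2
    obtain ⟨a, ha⟩ := D.row_surj p
    obtain ⟨a', ha'⟩ := D.row_surj p'
    refine ⟨a, a', ?_, ?_, ?_⟩
    · show E.row (D.row a) = i; rw [ha, hp]
    · show E.row (D.row a') = i; rw [ha', hp']
    · rw [ha, ha']; exact hne
  · intro j
    obtain ⟨i, hi⟩ := Fintype.exists_ne_of_one_lt_card
      (by simp only [Fintype.card_fin]; omega) j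
    have h2 : ∃ q q' : Fin s, E.col q = j ∧ E.col q' = j ∧ q ≠ q' := by
      by_contra hcon
      push_neg at hcon
      exact (hE i j hi).1 (fun p _ c hc c' hc' => by
        rw [hcon c c' hc hc'])
    obtain ⟨q, q', hq, hq', hne⟩ := h2
    obtain ⟨b, hb⟩ := D.col_surj q
    obtain ⟨b', hb'⟩ := D.col_surj q'
    refine ⟨b, b', ?_, ?_, ?_⟩
    · show E.col (D.col b) = j; rw [hb, hq]
    · show E.col (D.col b') = j; rw [hb', hq']
    · rw [hb, hb']; exact hne

end TwPaper
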